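/- Assume QC = ρωC with ρ > 0, |ω| = 1 (so C is an eigenvector of Q), and hypothesis (jsr_λ) with λ < ρ. Then sup_{x∈[0,1]} ‖(ρω)^{−K} S_K(x) − F(x)‖ = O((λ/ρ)^K) as K → ∞, where F is the unique continuous solution of the basic dilation equation with V = C. -/

import Mathlib

open scoped Classical BigOperators
open Filter Asymptotics
open Matrix

attribute [local instance] Matrix.linftyOpNormedAddCommGroup Matrix.linftyOpNormedRing

noncomputable section

/-- `A_w = A_{w_1} ⋯ A_{w_K}` for a word `w` of length `K` over the digit alphabet. -/
def wordProd {B d : ℕ} (A : Fin B → Matrix (Fin d) (Fin d) ℂ) {K : ℕ}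
    (w : Fin K → Fin B) : Matrix (Fin d) (Fin d) ℂ :=
  ((List.ofFn w).map A).prod

/-- `(0.w)_B = Σ_{k=1}^K w_k B^{-k}`. -/
def wordVal {B K : ℕ} (w : Fin K → Fin B) : ℝ :=
  ∑ k : Fin K, (w k : ℝ) / (B : ℝ) ^ ((k : ℕ) + 1)

/-- The running sum `S_K(x) = Σ_{|w|=K, (0.w)_B ≤ x} A_w C`. -/
def runSum {B d : ℕ} (A : Fin B → Matrix (Fin d) (Fin d) ℂ) (C : Fin d → ℂ)
    (K : ℕ) (x : ℝ) : Fin d → ℂ :=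
  ∑ w : Fin K → Fin B, if wordVal w ≤ x then (wordProd A w).mulVec C else 0

/-- The basic dilation equation for data `ρ, ω, V`. -/
def DilationEq {B d : ℕ} (A : Fin B → Matrix (Fin d) (Fin d) ℂ) (ρ : ℝ) (ω : ℂ)
    (V : Fin d → ℂ) (Φ : ℝ → Fin d → ℂ) : Prop :=
  Φ 0 = 0 ∧ Φ 1 = V ∧
    ∀ r : Fin B, ∀ x : ℝ, (r : ℝ) / B ≤ x → x < ((r : ℝ) + 1) / B →
      Φ x = ((ρ : ℂ) * ω)⁻¹ •
        ((∑ s ∈ Finset.univ.filter fun s : Fin B => s < r, (A s).mulVec V) +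
          (A r).mulVec (Φ (B * x - r)))

section AuxLemmas
variable {B d : ℕ} (A : Fin B → Matrix (Fin d) (Fin d) ℂ)

lemma wordProd_nil (w : Fin 0 → Fin B) : wordProd A w = 1 := by
  simp [wordProd]

lemma wordProd_cons {K : ℕ} (s : Fin B) (w : Fin K → Fin B) :
    wordProd A (Fin.cons s w) = A s * wordProd A w := by
  simp [wordProd, List.ofFn_succ]

lemma wordVal_nil (w : Fin 0 → Fin B) : wordVal w = 0 := by
  simp [wordVal]

lemma wordVal_cons {K : ℕ} (s : Fin B) (w : Fin K → Fin B) :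
    wordVal (Fin.cons s w) = (s : ℝ) / B + wordVal w / B := by
  simp only [wordVal, Fin.sum_univ_succ, Fin.cons_zero, Fin.cons_succ, pow_one,
    Finset.sum_div, Fin.val_succ, div_div, pow_succ, Fin.val_zero, pow_zero, mul_one, one_mul]

lemma wordVal_nonneg {K : ℕ} (w : Fin K → Fin B) : 0 ≤ wordVal w :=
  Finset.sum_nonneg fun k _ => div_nonneg (Nat.cast_nonneg _) (by positivity)

lemma wordVal_add_le (hB : 2 ≤ B) : ∀ {K : ℕ} (w : Fin K → Fin B),
    wordVal w + ((B : ℝ) ^ K)⁻¹ ≤ 1 := by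
  have hB0 : (0:ℝ) < B := by positivity
  intro K
  induction K with
  | zero => intro w; simp [wordVal_nil]
  | succ K ih =>
    intro w
    rw [← Fin.cons_self_tail w, wordVal_cons]
    have h1 : (w 0 : ℝ) + 1 ≤ B := by exact_mod_cast Nat.succ_le_of_lt (w 0).isLt
    have h2 := ih (Fin.tail w)
    have h3 : ((B:ℝ) ^ (K+1))⁻¹ = ((B:ℝ)^K)⁻¹ / B := by
      rw [pow_succ, mul_inv, div_eq_mul_inv]
    rw [h3, ← add_div, ← add_div, div_le_iff₀ hB0, one_mul]
    linarith

lemma wordVal_lt_one (hB : 2 ≤ B) {K : ℕ} (w : Fin K → Fin B) : wordVal w < 1 := by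
  have := wordVal_add_le hB w
  have h : (0:ℝ) < ((B:ℝ)^K)⁻¹ := by positivity
  linarith

lemma wordVal_sep (hB : 2 ≤ B) : ∀ {K : ℕ} (w w' : Fin K → Fin B), w ≠ w' →
    ((B : ℝ) ^ K)⁻¹ ≤ |wordVal w - wordVal w'| := by
  have hB0 : (0:ℝ) < B := by positivity
  intro K
  induction K with
  | zero => intro w w' hne; exact absurd (funext fun k => k.elim0) hne
  | succ K ih =>
    intro w w' hne
    rw [← Fin.cons_self_tail w, ← Fin.cons_self_tail w'] at hne ⊢
    rw [wordVal_cons, wordVal_cons]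
    set s := w 0 with hsdef; set s' := w' 0 with hs'def
    set v := wordVal (Fin.tail w) with hvdef
    set v' := wordVal (Fin.tail w') with hv'def
    have hpow : ((B:ℝ) ^ (K+1))⁻¹ = ((B:ℝ)^K)⁻¹ / B := by
      rw [pow_succ, mul_inv, div_eq_mul_inv]
    rw [hpow]
    by_cases hs : s = s'
    · have htail : Fin.tail w ≠ Fin.tail w' := by
        intro h; apply hne; rw [hs, h]
      have hih := ih _ _ htail
      have he : (s:ℝ)/B + v/B - ((s':ℝ)/B + v'/B) = (v - v')/B := by rw [hs]; ring
      rw [he, abs_div, abs_of_pos hB0]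
      gcongr
    · have hz : ((s:ℤ)) ≠ ((s':ℤ)) := by
        exact_mod_cast fun h => hs (Fin.ext (by exact_mod_cast h))
      have h1i : (1:ℤ) ≤ |(s:ℤ) - (s':ℤ)| := Int.one_le_abs (sub_ne_zero.mpr hz)
      have hss : (1:ℝ) ≤ |(s:ℝ) - (s':ℝ)| := by exact_mod_cast h1i
      have hv1 := wordVal_add_le hB (Fin.tail w)
      have hv2 := wordVal_add_le hB (Fin.tail w')
      have hv0 := wordVal_nonneg (Fin.tail w)
      have hv0' := wordVal_nonneg (Fin.tail w')
      have hK0 : (0:ℝ) < ((B:ℝ)^K)⁻¹ := by positivity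
      have h1 : |v - v'| ≤ 1 - ((B:ℝ)^K)⁻¹ :=
        abs_le.mpr ⟨by rw [← hvdef, ← hv'def] at *; linarith, by rw [← hvdef, ← hv'def] at *; linarith⟩
      have h2 : |(s:ℝ) - s'| ≤ |(((s:ℝ)-s') + (v - v'))| + |v - v'| := by
        have he : |(s:ℝ) - s'| = |(((s:ℝ)-s') + (v-v')) + (-(v-v'))| := by congr 1; ring
        rw [he]; exact (abs_add_le _ _).trans (by rw [abs_neg])
      have habs : ((B:ℝ)^K)⁻¹ ≤ |((s:ℝ) - s') + (v - v')| := by linarith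
      have he : (s:ℝ)/B + v/B - ((s':ℝ)/B + v'/B) = (((s:ℝ)-s') + (v - v'))/B := by ring
      rw [he, abs_div, abs_of_pos hB0]
      gcongr

lemma sum_wordProd : ∀ (K : ℕ), ∑ w : Fin K → Fin B, wordProd A w = (∑ r, A r) ^ K := by
  intro K
  induction K with
  | zero =>
    rw [pow_zero]
    rw [Finset.sum_eq_single (fun k => k.elim0)]
    · exact wordProd_nil A _
    · intro b _ hb; exact absurd (funext fun k => k.elim0) hb
    · intro h; exact absurd (Finset.mem_univ _) h
  | succ K ih =>
    rw [← Equiv.sum_comp (Fin.consEquiv fun _ => Fin B) (wordProd A), Fintype.sum_prod_type]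
    have h1 : ∀ s (w : Fin K → Fin B),
        wordProd A ((Fin.consEquiv fun _ => Fin B) (s, w)) = A s * wordProd A w :=
      fun s w => wordProd_cons A s w
    simp only [h1, ← Finset.mul_sum, ih]
    rw [← Finset.sum_mul, pow_succ']

end AuxLemmas

section Aux2
variable {B d : ℕ} (A : Fin B → Matrix (Fin d) (Fin d) ℂ)

lemma wordProd_append {m n : ℕ} (u : Fin m → Fin B) (v : Fin n → Fin B) :
    wordProd A (Fin.append u v) = wordProd A u * wordProd A v := by
  have h1 : (fun i => Fin.append u v (Fin.castLE (Nat.le_add_right m n) i)) = u :=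
    funext fun i => Fin.append_left u v i
  have h2 : (fun j => Fin.append u v (Fin.natAdd m j)) = v :=
    funext fun j => Fin.append_right u v j
  rw [wordProd, List.ofFn_add, h1, h2, List.map_append, List.prod_append]; rfl

lemma norm_wordProd_le (hd : 1 ≤ d) {lam : ℝ} (hlam : 0 < lam) {T : ℕ} (hT : 1 ≤ T)
    (hw : ∀ w : Fin T → Fin B, ‖wordProd A w‖ ≤ lam ^ T) :
    ∀ K (w : Fin K → Fin B),
      ‖wordProd A w‖ ≤ (max 1 ((1 + ∑ r, ‖A r‖) / lam)) ^ T * lam ^ K := by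
  haveI : Nonempty (Fin d) := ⟨⟨0, hd⟩⟩
  set c := 1 + ∑ r, ‖A r‖ with hc
  have hsum0 : 0 ≤ ∑ r, ‖A r‖ := Finset.sum_nonneg fun r _ => norm_nonneg _
  have hc1 : 1 ≤ c := by rw [hc]; linarith
  have hcr : ∀ r, ‖A r‖ ≤ c := by
    intro r
    have := Finset.single_le_sum (f := fun r : Fin B => ‖A r‖)
      (fun i _ => norm_nonneg _) (Finset.mem_univ r)
    rw [hc]; linarith
  set M := (max 1 (c / lam)) ^ T with hM
  have hmax1 : (1:ℝ) ≤ max 1 (c / lam) := le_max_left _ _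
  have hbase : ∀ K (w : Fin K → Fin B), ‖wordProd A w‖ ≤ c ^ K := by
    intro K
    induction K with
    | zero => intro w; rw [wordProd_nil, pow_zero, norm_one]
    | succ n ih =>
      intro w
      rw [← Fin.cons_self_tail w, wordProd_cons]
      calc ‖A (w 0) * wordProd A (Fin.tail w)‖
          ≤ ‖A (w 0)‖ * ‖wordProd A (Fin.tail w)‖ := norm_mul_le _ _
        _ ≤ c * c ^ n := mul_le_mul (hcr _) (ih _) (norm_nonneg _) (by linarith)
        _ = c ^ (n+1) := (pow_succ' c n).symm
  intro K
  induction K using Nat.strong_induction_on with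
  | _ K ihK =>
    intro w
    by_cases hKT : K < T
    · calc ‖wordProd A w‖ ≤ c ^ K := hbase K w
        _ = (c / lam) ^ K * lam ^ K := by
            rw [div_pow, div_mul_cancel₀ _ (by positivity : lam ^ K ≠ 0)]
        _ ≤ (max 1 (c / lam)) ^ K * lam ^ K := by gcongr; exact le_max_right _ _
        _ ≤ M * lam ^ K := by
            rw [hM]
            have : (max 1 (c / lam)) ^ K ≤ (max 1 (c / lam)) ^ T :=
              pow_le_pow_right₀ hmax1 hKT.le
            have hl : (0:ℝ) ≤ lam ^ K := by positivity
            nlinarith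
    · push_neg at hKT
      obtain ⟨m, rfl⟩ : ∃ m, K = T + m := ⟨K - T, (Nat.add_sub_cancel' hKT).symm⟩
      rw [← Fin.append_castAdd_natAdd (f := w), wordProd_append]
      have h2 := ihK m (by omega) (fun j => w (Fin.natAdd T j))
      calc ‖wordProd A (fun i => w (Fin.castAdd m i)) * wordProd A (fun j => w (Fin.natAdd T j))‖
          ≤ ‖wordProd A (fun i => w (Fin.castAdd m i))‖ * ‖wordProd A (fun j => w (Fin.natAdd T j))‖ :=
            norm_mul_le _ _
        _ ≤ lam ^ T * (M * lam ^ m) :=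
            mul_le_mul (hw _) h2 (norm_nonneg _) (by positivity)
        _ = M * lam ^ (T + m) := by rw [pow_add]; ring

lemma mulVec_sum' {ι : Type*} (s : Finset ι) (M : ι → Matrix (Fin d) (Fin d) ℂ) (v : Fin d → ℂ) :
    (∑ i ∈ s, M i) *ᵥ v = ∑ i ∈ s, M i *ᵥ v :=
  map_sum (Matrix.mulVec.addMonoidHomLeft v) M s

lemma sum_mulVec' {ι : Type*} (s : Finset ι) (M : Matrix (Fin d) (Fin d) ℂ) (v : ι → Fin d → ℂ) :
    M *ᵥ (∑ i ∈ s, v i) = ∑ i ∈ s, M *ᵥ v i := by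
  have h := map_sum (Matrix.mulVecLin M) v s
  simp only [Matrix.mulVecLin_apply] at h
  exact h

end Aux2

section Aux3
variable {B d : ℕ} (A : Fin B → Matrix (Fin d) (Fin d) ℂ) (C : Fin d → ℂ)

lemma pow_mulVec_eigen {μ : ℂ} (hC : (∑ r, A r) *ᵥ C = μ • C) (K : ℕ) :
    ((∑ r, A r) ^ K) *ᵥ C = μ ^ K • C := by
  induction K with
  | zero => simp [Matrix.one_mulVec]
  | succ K ih =>
    rw [pow_succ', ← Matrix.mulVec_mulVec, ih, Matrix.mulVec_smul, hC, smul_smul, ← pow_succ]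

lemma runSum_neg (K : ℕ) (x : ℝ) (hx : x < 0) : runSum A C K x = 0 := by
  refine Finset.sum_eq_zero fun w _ => ?_
  rw [if_neg (by linarith [wordVal_nonneg w])]

lemma runSum_ge_one (hB : 2 ≤ B) (K : ℕ) (x : ℝ) (hx : 1 ≤ x) :
    runSum A C K x = ((∑ r, A r) ^ K) *ᵥ C := by
  rw [runSum, ← sum_wordProd, mulVec_sum']
  refine Finset.sum_congr rfl fun w _ => ?_
  rw [if_pos (le_trans (wordVal_lt_one hB w).le hx)]

lemma runSum_rec (hB : 2 ≤ B) (K : ℕ) (r : Fin B) (x : ℝ)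
    (h1 : (r : ℝ) / B ≤ x) (h2 : x < ((r : ℝ) + 1) / B) :
    runSum A C (K + 1) x
      = (∑ s ∈ Finset.univ.filter fun s : Fin B => s < r,
          (A s) *ᵥ (((∑ r', A r') ^ K) *ᵥ C))
        + (A r) *ᵥ (runSum A C K (B * x - r)) := by
  have hB0 : (0:ℝ) < B := by positivity
  rw [runSum, ← Equiv.sum_comp (Fin.consEquiv fun _ => Fin B)
    (fun w : Fin (K+1) → Fin B => if wordVal w ≤ x then (wordProd A w) *ᵥ C else 0),
    Fintype.sum_prod_type]
  have hsum : ∀ s : Fin B,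
      (∑ w : Fin K → Fin B, if wordVal (Fin.cons s w) ≤ x then (wordProd A (Fin.cons s w)) *ᵥ C else 0)
        = (if s < r then (A s) *ᵥ (((∑ r', A r') ^ K) *ᵥ C) else 0)
          + (if s = r then (A r) *ᵥ (runSum A C K (B * x - r)) else 0) := by
    intro s
    rcases lt_trichotomy s r with hlt | heq | hgt
    · rw [if_pos hlt, if_neg (ne_of_lt hlt), add_zero]
      have hsr : (s : ℝ) + 1 ≤ (r : ℝ) := by exact_mod_cast Nat.succ_le_of_lt hlt
      have hcond : ∀ w : Fin K → Fin B, wordVal (Fin.cons s w) ≤ x := by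
        intro w
        rw [wordVal_cons]
        have hv := wordVal_lt_one hB w
        have : ((s : ℝ) + wordVal w) / B ≤ ((s : ℝ) + 1) / B := by
          gcongr
          try exact hv.le
        rw [← add_div] at *
        calc (↑↑s + wordVal w) / (B:ℝ) ≤ ((s:ℝ) + 1) / B := this
          _ ≤ (r : ℝ) / B := by gcongr
          _ ≤ x := h1
      calc (∑ w : Fin K → Fin B, if wordVal (Fin.cons s w) ≤ x then (wordProd A (Fin.cons s w)) *ᵥ C else 0)
          = ∑ w : Fin K → Fin B, (A s) *ᵥ ((wordProd A w) *ᵥ C) := by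
            refine Finset.sum_congr rfl fun w _ => ?_
            rw [if_pos (hcond w), wordProd_cons, ← Matrix.mulVec_mulVec]
        _ = (A s) *ᵥ (((∑ r', A r') ^ K) *ᵥ C) := by
            rw [← sum_mulVec', ← mulVec_sum', sum_wordProd]
    · subst heq
      rw [if_neg (lt_irrefl s), if_pos rfl, zero_add]
      have hcond : ∀ w : Fin K → Fin B,
          (wordVal (Fin.cons s w) ≤ x) ↔ (wordVal w ≤ B * x - s) := by
        intro w
        rw [wordVal_cons, ← add_div, div_le_iff₀ hB0]
        constructor <;> intro h <;> nlinarith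
      calc (∑ w : Fin K → Fin B, if wordVal (Fin.cons s w) ≤ x then (wordProd A (Fin.cons s w)) *ᵥ C else 0)
          = ∑ w : Fin K → Fin B, (A s) *ᵥ (if wordVal w ≤ B * x - s then (wordProd A w) *ᵥ C else 0) := by
            refine Finset.sum_congr rfl fun w _ => ?_
            rw [if_congr (hcond w) rfl rfl]
            split_ifs with h
            · rw [wordProd_cons, ← Matrix.mulVec_mulVec]
            · rw [Matrix.mulVec_zero]
        _ = (A s) *ᵥ (runSum A C K (B * x - s)) := by
            rw [← sum_mulVec']; rfl
    · rw [if_neg (asymm hgt), if_neg (ne_of_gt hgt), add_zero]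
      refine Finset.sum_eq_zero fun w _ => ?_
      have hrs : (r : ℝ) + 1 ≤ (s : ℝ) := by exact_mod_cast Nat.succ_le_of_lt hgt
      have hw0 := wordVal_nonneg w
      rw [if_neg]
      rw [wordVal_cons]
      push_neg
      calc x < ((r:ℝ) + 1) / B := h2
        _ ≤ (s : ℝ) / B := by gcongr
        _ ≤ (s : ℝ) / B + wordVal w / B := by
            have : 0 ≤ wordVal w / B := by positivity
            linarith
  calc (∑ s : Fin B, ∑ w : Fin K → Fin B,
        if wordVal ((Fin.consEquiv fun _ => Fin B) (s, w)) ≤ x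
        then (wordProd A ((Fin.consEquiv fun _ => Fin B) (s, w))) *ᵥ C else 0)
      = ∑ s : Fin B, ((if s < r then (A s) *ᵥ (((∑ r', A r') ^ K) *ᵥ C) else 0)
          + (if s = r then (A r) *ᵥ (runSum A C K (B * x - r)) else 0)) := by
        exact Finset.sum_congr rfl fun s _ => hsum s
    _ = _ := by
        rw [Finset.sum_add_distrib, Finset.sum_ite_eq' Finset.univ r
          (fun _ => (A r) *ᵥ (runSum A C K (B * x - r))), if_pos (Finset.mem_univ r),
          ← Finset.sum_filter]

end Aux3

section Aux4
variable {B d : ℕ} (A : Fin B → Matrix (Fin d) (Fin d) ℂ) (C : Fin d → ℂ) {μ : ℂ}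

/-- normalized running sum -/
def Gf (A : Fin B → Matrix (Fin d) (Fin d) ℂ) (C : Fin d → ℂ) (μ : ℂ) (K : ℕ) (x : ℝ) :
    Fin d → ℂ :=
  (μ ^ K)⁻¹ • runSum A C K x

lemma Gf_neg (K : ℕ) (x : ℝ) (hx : x < 0) : Gf A C μ K x = 0 := by
  rw [Gf, runSum_neg A C K x hx, smul_zero]

lemma Gf_ge_one (hB : 2 ≤ B) (hμ0 : μ ≠ 0) (hC : (∑ r, A r) *ᵥ C = μ • C)
    (K : ℕ) (x : ℝ) (hx : 1 ≤ x) : Gf A C μ K x = C := by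
  rw [Gf, runSum_ge_one A C hB K x hx, pow_mulVec_eigen A C hC,
    inv_smul_smul₀ (pow_ne_zero _ hμ0)]

lemma Gf_rec (hB : 2 ≤ B) (hμ0 : μ ≠ 0) (hC : (∑ r, A r) *ᵥ C = μ • C)
    (K : ℕ) (r : Fin B) (x : ℝ) (h1 : (r : ℝ) / B ≤ x) (h2 : x < ((r : ℝ) + 1) / B) :
    Gf A C μ (K + 1) x
      = μ⁻¹ • ((∑ s ∈ Finset.univ.filter fun s : Fin B => s < r, (A s) *ᵥ C)
          + (A r) *ᵥ (Gf A C μ K (B * x - r))) := by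
  have hpK : μ ^ K ≠ 0 := pow_ne_zero _ hμ0
  rw [Gf, Gf, runSum_rec A C hB K r x h1 h2, pow_mulVec_eigen A C hC]
  simp only [Matrix.mulVec_smul, ← Finset.smul_sum, smul_add, smul_smul]
  congr 1
  · congr 1
    rw [pow_succ, mul_inv, mul_comm (μ^K)⁻¹ μ⁻¹, mul_assoc, inv_mul_cancel₀ hpK, mul_one]
  · congr 1
    rw [pow_succ, mul_inv, mul_comm]

lemma exists_digit (hB : 2 ≤ B) {x : ℝ} (h0 : 0 ≤ x) (h1 : x < 1) :
    ∃ r : Fin B, (r : ℝ) / B ≤ x ∧ x < ((r : ℝ) + 1) / B ∧ 0 ≤ B * x - r ∧ B * x - r < 1 := by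
  have hB0 : (0:ℝ) < B := by positivity
  have hfl : (⌊B * x⌋₊ : ℝ) ≤ B * x := Nat.floor_le (by positivity)
  have hfl2 : B * x < ⌊B * x⌋₊ + 1 := Nat.lt_floor_add_one _
  have hrB : ⌊B * x⌋₊ < B := by
    have h2 : (⌊B * x⌋₊ : ℝ) < B := lt_of_le_of_lt hfl (by nlinarith)
    exact_mod_cast h2
  refine ⟨⟨⌊B * x⌋₊, hrB⟩, ?_, ?_, ?_, ?_⟩
  · show (⌊B * x⌋₊ : ℝ) / B ≤ x
    rw [div_le_iff₀ hB0]
    nlinarith [mul_comm x (B:ℝ)]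
  · show x < ((⌊B * x⌋₊ : ℝ) + 1) / B
    rw [lt_div_iff₀ hB0]
    nlinarith [mul_comm x (B:ℝ)]
  · show (0:ℝ) ≤ B * x - (⌊B * x⌋₊ : ℝ)
    linarith
  · show (B:ℝ) * x - (⌊B * x⌋₊ : ℝ) < 1
    linarith

lemma iterDiff (hB : 2 ≤ B) (D : ℕ → ℝ → Fin d → ℂ)
    (hrec : ∀ (n : ℕ) (r : Fin B) (x : ℝ), (r : ℝ) / B ≤ x → x < ((r : ℝ) + 1) / B →
      D (n + 1) x = μ⁻¹ • (A r) *ᵥ (D n (B * x - r))) :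
    ∀ (n : ℕ) (x : ℝ), 0 ≤ x → x < 1 → ∃ (w : Fin n → Fin B) (y : ℝ), 0 ≤ y ∧ y < 1 ∧
      D n x = (μ ^ n)⁻¹ • (wordProd A w) *ᵥ (D 0 y) := by
  intro n
  induction n with
  | zero =>
    intro x h0 h1
    exact ⟨fun k => k.elim0, x, h0, h1, by
      simp [wordProd_nil, Matrix.one_mulVec]⟩
  | succ n ih =>
    intro x h0 h1
    obtain ⟨r, hr1, hr2, hy0, hy1⟩ := exists_digit hB h0 h1
    obtain ⟨w, y, hy0', hy1', hDy⟩ := ih (B * x - r) hy0 hy1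
    refine ⟨Fin.cons r w, y, hy0', hy1', ?_⟩
    rw [hrec n r x hr1 hr2, hDy, wordProd_cons, Matrix.mulVec_smul,
      ← Matrix.mulVec_mulVec, smul_smul, pow_succ', mul_inv]

end Aux4

section Aux5
variable {B d : ℕ} (A : Fin B → Matrix (Fin d) (Fin d) ℂ) (C : Fin d → ℂ)

lemma norm_runSum_le (K : ℕ) (x : ℝ) {b : ℝ} (hb : 0 ≤ b)
    (hw : ∀ w : Fin K → Fin B, ‖wordProd A w‖ ≤ b) :
    ‖runSum A C K x‖ ≤ (B:ℝ)^K * (b * ‖C‖) := by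
  rw [runSum]
  refine (norm_sum_le _ _).trans ?_
  have hbd : ∀ w : Fin K → Fin B,
      ‖if wordVal w ≤ x then (wordProd A w) *ᵥ C else 0‖ ≤ b * ‖C‖ := by
    intro w; split_ifs
    · exact (Matrix.linfty_opNorm_mulVec _ _).trans
        (mul_le_mul_of_nonneg_right (hw w) (norm_nonneg _))
    · rw [norm_zero]; positivity
  calc ∑ w : Fin K → Fin B, ‖if wordVal w ≤ x then (wordProd A w) *ᵥ C else 0‖
      ≤ (Finset.univ : Finset (Fin K → Fin B)).card • (b * ‖C‖) :=
        Finset.sum_le_card_nsmul _ _ _ (fun w _ => hbd w)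
    _ = (B:ℝ)^K * (b * ‖C‖) := by
        rw [Finset.card_univ, nsmul_eq_mul]
        congr 1
        rw [Fintype.card_fun, Fintype.card_fin, Fintype.card_fin]
        push_cast; ring

lemma runSum_zero (hB : 2 ≤ B) (K : ℕ) :
    runSum A C K 0
      = (wordProd A (fun _ : Fin K => (⟨0, by omega⟩ : Fin B))) *ᵥ C := by
  rw [runSum]
  set w0 : Fin K → Fin B := fun _ => ⟨0, by omega⟩ with hw0
  have hval0 : wordVal w0 = 0 := by simp [wordVal, hw0]
  rw [Finset.sum_eq_single w0]
  · rw [if_pos (le_of_eq hval0)]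
  · intro w _ hne
    rw [if_neg]
    have hsep := wordVal_sep hB w w0 hne
    rw [hval0, sub_zero, abs_of_nonneg (wordVal_nonneg w)] at hsep
    have hpos : (0:ℝ) < ((B:ℝ)^K)⁻¹ := by positivity
    intro h; linarith
  · intro h; exact absurd (Finset.mem_univ _) h

lemma norm_runSum_sub_le (hB : 2 ≤ B) (K : ℕ) {u v : ℝ} (hvu : v ≤ u)
    (hlt : u - v < ((B:ℝ)^K)⁻¹) {b : ℝ} (hb : 0 ≤ b)
    (hw : ∀ w : Fin K → Fin B, ‖wordProd A w‖ ≤ b) :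
    ‖runSum A C K u - runSum A C K v‖ ≤ b * ‖C‖ := by
  have hdiff : runSum A C K u - runSum A C K v
      = ∑ w : Fin K → Fin B,
          (if v < wordVal w ∧ wordVal w ≤ u then (wordProd A w) *ᵥ C else 0) := by
    rw [runSum, runSum, ← Finset.sum_sub_distrib]
    refine Finset.sum_congr rfl fun w _ => ?_
    by_cases hy' : wordVal w ≤ v
    · rw [if_pos hy', if_pos (hy'.trans hvu),
        if_neg (fun hc => absurd hc.1 (not_lt.mpr hy')), sub_self]
    · by_cases hx' : wordVal w ≤ u
      · rw [if_pos hx', if_neg hy', if_pos ⟨lt_of_not_ge hy', hx'⟩, sub_zero]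
      · rw [if_neg hx', if_neg hy', if_neg (fun hc => hx' hc.2), sub_self]
  rw [hdiff, ← Finset.sum_filter]
  have huniq : ∀ w ∈ Finset.univ.filter (fun w : Fin K → Fin B => v < wordVal w ∧ wordVal w ≤ u),
      ∀ w' ∈ Finset.univ.filter (fun w : Fin K → Fin B => v < wordVal w ∧ wordVal w ≤ u),
        w = w' := by
    intro w hwm w' hwm'
    by_contra hne
    have hsep := wordVal_sep hB w w' hne
    rw [Finset.mem_filter] at hwm hwm'
    have h1 := hwm.2.1; have h2 := hwm.2.2; have h3 := hwm'.2.1; have h4 := hwm'.2.2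
    have : |wordVal w - wordVal w'| ≤ u - v := abs_le.mpr ⟨by linarith, by linarith⟩
    linarith
  haveI : Nonempty (Fin K → Fin B) := ⟨fun _ => ⟨0, by omega⟩⟩
  rcases Finset.card_le_one_iff_subset_singleton.mp (Finset.card_le_one.mpr huniq) with ⟨w0, hsub⟩
  calc ‖∑ w ∈ Finset.univ.filter (fun w : Fin K → Fin B => v < wordVal w ∧ wordVal w ≤ u),
        (wordProd A w) *ᵥ C‖
      ≤ ∑ w ∈ Finset.univ.filter (fun w : Fin K → Fin B => v < wordVal w ∧ wordVal w ≤ u),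
        ‖(wordProd A w) *ᵥ C‖ := norm_sum_le _ _
    _ ≤ ∑ w ∈ ({w0} : Finset (Fin K → Fin B)), ‖(wordProd A w) *ᵥ C‖ :=
        Finset.sum_le_sum_of_subset_of_nonneg hsub (fun _ _ _ => norm_nonneg _)
    _ = ‖(wordProd A w0) *ᵥ C‖ := Finset.sum_singleton _ _
    _ ≤ b * ‖C‖ := (Matrix.linfty_opNorm_mulVec _ _).trans
        (mul_le_mul_of_nonneg_right (hw w0) (norm_nonneg _))

end Aux5


set_option maxHeartbeats 1000000 in
/-- if `C` is an eigenvector of `Q` for `ρω` and (jsr_λ) holds with `λ < ρ`,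
the speed of convergence of `(ρω)^{-K} S_K` to the dilation solution is `O((λ/ρ)^K)`. -/
theorem runSum_eigenvector_speed_jsr (B d : ℕ) (hB : 2 ≤ B) (hd : 1 ≤ d)
    (A : Fin B → Matrix (Fin d) (Fin d) ℂ) (C : Fin d → ℂ)
    (ρ : ℝ) (hρ : 0 < ρ) (ω : ℂ) (hω : ‖ω‖ = 1)
    (hC : (∑ r, A r).mulVec C = ((ρ : ℂ) * ω) • C)
    -- hypothesis (jsr_λ)
    (lam : ℝ) (hlam : 0 < lam) (hlamρ : lam < ρ)
    (hjsr : ∃ T : ℕ, 1 ≤ T ∧ ∀ w : Fin T → Fin B, ‖wordProd A w‖ ≤ lam ^ T) :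
    ∃ F : ℝ → Fin d → ℂ,
      ContinuousOn F (Set.Icc 0 1) ∧ DilationEq A ρ ω C F ∧
      (∀ Ψ : ℝ → Fin d → ℂ, ContinuousOn Ψ (Set.Icc 0 1) → DilationEq A ρ ω C Ψ →
        Set.EqOn Ψ F (Set.Icc 0 1)) ∧
      (fun K : ℕ => ⨆ x : Set.Icc (0:ℝ) 1,
          ‖(((ρ : ℂ) * ω) ^ K)⁻¹ • runSum A C K x - F x‖) =O[atTop]
        fun K => (lam / ρ) ^ K := by
  classical
  obtain ⟨T, hT, hjw⟩ := hjsr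
  set μ := (ρ : ℂ) * ω with hμdef
  have hμnorm : ‖μ‖ = ρ := by
    rw [hμdef, norm_mul, Complex.norm_real, Real.norm_eq_abs, abs_of_pos hρ, hω, mul_one]
  have hμ0 : μ ≠ 0 := by
    intro h; rw [h, norm_zero] at hμnorm; exact absurd hμnorm.symm (ne_of_gt hρ)
  set q := lam / ρ with hqdef
  have hq0 : 0 < q := by positivity
  have hq1 : q < 1 := (div_lt_one hρ).mpr hlamρ
  set M := (max 1 ((1 + ∑ r, ‖A r‖) / lam)) ^ T with hMdef
  have hMw : ∀ K (w : Fin K → Fin B), ‖wordProd A w‖ ≤ M * lam ^ K :=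
    norm_wordProd_le A hd hlam hT hjw
  have hM1 : (1:ℝ) ≤ M := by
    rw [hMdef]
    calc (1:ℝ) = 1 ^ T := (one_pow T).symm
      _ ≤ _ := pow_le_pow_left₀ zero_le_one (le_max_left _ _) T
  have hC' : (∑ r, A r) *ᵥ C = μ • C := hC
  have hB0 : (0:ℝ) < B := by positivity
  set D : ℕ → ℝ → Fin d → ℂ := fun n x => Gf A C μ (n+1) x - Gf A C μ n x with hDdef
  have hDrec : ∀ (n : ℕ) (r : Fin B) (x : ℝ), (r:ℝ)/B ≤ x → x < ((r:ℝ)+1)/B →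
      D (n+1) x = μ⁻¹ • (A r) *ᵥ (D n (B*x - r)) := by
    intro n r x h1 h2
    simp only [hDdef]
    rw [Gf_rec A C hB hμ0 hC' (n+1) r x h1 h2, Gf_rec A C hB hμ0 hC' n r x h1 h2,
      ← smul_sub, add_sub_add_left_eq_sub, ← Matrix.mulVec_sub]
  set c0 := M * ‖C‖ + ρ⁻¹ * ((B:ℝ) * ((M * lam) * ‖C‖)) with hc0def
  have hc00 : 0 ≤ c0 := by positivity
  have hGnorm : ∀ (K:ℕ) (x:ℝ), ‖Gf A C μ K x‖ = (ρ^K)⁻¹ * ‖runSum A C K x‖ := by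
    intro K x
    rw [Gf, norm_smul, norm_inv, norm_pow, hμnorm]
  have hMlam : ∀ K : ℕ, 0 ≤ M * lam ^ K := fun K => by positivity
  have hD0 : ∀ y : ℝ, ‖D 0 y‖ ≤ c0 := by
    intro y
    have h1 : ‖Gf A C μ 1 y‖ ≤ ρ⁻¹ * ((B:ℝ) * ((M * lam) * ‖C‖)) := by
      rw [hGnorm]
      have h := norm_runSum_le A C 1 y (hMlam 1) (hMw 1)
      simp only [pow_one] at h ⊢
      exact mul_le_mul_of_nonneg_left h (by positivity)
    have h0 : ‖Gf A C μ 0 y‖ ≤ M * ‖C‖ := by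
      rw [hGnorm]
      have h := norm_runSum_le A C 0 y (hMlam 0) (hMw 0)
      simp only [pow_zero, inv_one, one_mul] at h ⊢
      linarith
    calc ‖D 0 y‖ ≤ ‖Gf A C μ 1 y‖ + ‖Gf A C μ 0 y‖ := norm_sub_le _ _
      _ ≤ c0 := by rw [hc0def]; linarith
  have hDb : ∀ (n:ℕ) (x:ℝ), ‖D n x‖ ≤ (M * c0) * q ^ n := by
    intro n x
    rcases lt_or_ge x 0 with hx | hx
    · simp only [hDdef]
      rw [Gf_neg A C _ x hx, Gf_neg A C _ x hx, sub_self, norm_zero]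
      positivity
    rcases le_or_gt 1 x with hx1 | hx1
    · simp only [hDdef]
      rw [Gf_ge_one A C hB hμ0 hC' _ x hx1, Gf_ge_one A C hB hμ0 hC' _ x hx1,
        sub_self, norm_zero]
      positivity
    · obtain ⟨w, y, hy0, hy1, hDx⟩ := iterDiff A hB D hDrec n x hx hx1
      rw [hDx, norm_smul, norm_inv, norm_pow, hμnorm]
      have h1 : ‖(wordProd A w) *ᵥ (D 0 y)‖ ≤ (M * lam ^ n) * c0 :=
        (Matrix.linfty_opNorm_mulVec _ _).trans
          (mul_le_mul (hMw n w) (hD0 y) (norm_nonneg _) (hMlam n))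
      calc (ρ^n)⁻¹ * ‖(wordProd A w) *ᵥ (D 0 y)‖
          ≤ (ρ^n)⁻¹ * ((M * lam^n) * c0) :=
            mul_le_mul_of_nonneg_left h1 (by positivity)
        _ = (M * c0) * q^n := by rw [hqdef, div_pow]; field_simp
  have hqsum : Summable (fun n : ℕ => q ^ n) := summable_geometric_of_lt_one hq0.le hq1
  have hDsum : ∀ x, Summable (fun n => D n x) := fun x =>
    Summable.of_norm_bounded (hqsum.mul_left (M*c0)) (fun n => hDb n x)
  set F : ℝ → Fin d → ℂ := fun x => Gf A C μ 0 x + ∑' n, D n x with hFdef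
  have htail : ∀ (K:ℕ) (x:ℝ), ‖F x - Gf A C μ K x‖ ≤ ((M*c0) * (1-q)⁻¹) * q^K := by
    intro K x
    have htele : ∑ n ∈ Finset.range K, D n x = Gf A C μ K x - Gf A C μ 0 x := by
      simp only [hDdef]
      exact Finset.sum_range_sub (fun n => Gf A C μ n x) K
    have hsplit := Summable.sum_add_tsum_nat_add (f := fun n => D n x) K (hDsum x)
    have heq : F x - Gf A C μ K x = ∑' n, D (n + K) x := by
      simp only [hFdef]
      rw [← hsplit, htele]
      abel
    rw [heq]
    have hb : ∀ n:ℕ, ‖D (n+K) x‖ ≤ ((M*c0) * q^K) * q^n := by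
      intro n
      calc ‖D (n+K) x‖ ≤ (M*c0) * q^(n+K) := hDb _ _
        _ = ((M*c0) * q^K) * q^n := by rw [pow_add]; ring
    have hsg : Summable (fun n:ℕ => ((M*c0) * q^K) * q^n) := hqsum.mul_left _
    have hsn : Summable (fun n:ℕ => ‖D (n+K) x‖) :=
      Summable.of_nonneg_of_le (fun _ => norm_nonneg _) hb hsg
    calc ‖∑' n, D (n+K) x‖ ≤ ∑' n, ‖D (n+K) x‖ := norm_tsum_le_tsum_norm hsn
      _ ≤ ∑' n:ℕ, ((M*c0) * q^K) * q^n := Summable.tsum_le_tsum hb hsn hsg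
      _ = ((M*c0) * q^K) * (1-q)⁻¹ := by
          rw [tsum_mul_left, tsum_geometric_of_lt_one hq0.le hq1]
      _ = ((M*c0) * (1-q)⁻¹) * q^K := by ring
  have hqpow : Tendsto (fun K:ℕ => q ^ K) atTop (nhds 0) :=
    tendsto_pow_atTop_nhds_zero_of_lt_one hq0.le hq1
  have hGtend : ∀ x, Tendsto (fun K => Gf A C μ K x) atTop (nhds (F x)) := by
    intro x
    rw [tendsto_iff_norm_sub_tendsto_zero]
    have hb : ∀ K, ‖Gf A C μ K x - F x‖ ≤ ((M*c0)*(1-q)⁻¹) * q^K := fun K => by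
      rw [norm_sub_rev]; exact htail K x
    have h0 : Tendsto (fun K:ℕ => ((M*c0)*(1-q)⁻¹) * q^K) atTop (nhds 0) := by
      simpa using hqpow.const_mul ((M*c0)*(1-q)⁻¹)
    exact squeeze_zero (fun K => norm_nonneg _) hb h0
  have hF1 : F 1 = C := by
    have h1 : Tendsto (fun K => Gf A C μ K 1) atTop (nhds C) := by
      have he : (fun K => Gf A C μ K 1) = fun _ => C :=
        funext fun K => Gf_ge_one A C hB hμ0 hC' K 1 le_rfl
      rw [he]; exact tendsto_const_nhds
    exact tendsto_nhds_unique (hGtend 1) h1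
  have hF0 : F 0 = 0 := by
    have hb : ∀ K:ℕ, ‖Gf A C μ K 0‖ ≤ (M * ‖C‖) * q^K := by
      intro K
      rw [hGnorm, runSum_zero A C hB K]
      calc (ρ^K)⁻¹ * ‖(wordProd A (fun _ : Fin K => (⟨0, by omega⟩ : Fin B))) *ᵥ C‖
          ≤ (ρ^K)⁻¹ * ((M * lam^K) * ‖C‖) := by
            refine mul_le_mul_of_nonneg_left ?_ (by positivity)
            exact (Matrix.linfty_opNorm_mulVec _ _).trans
              (mul_le_mul_of_nonneg_right (hMw K _) (norm_nonneg _))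
        _ = (M*‖C‖)*q^K := by rw [hqdef, div_pow]; field_simp
    have h0 : Tendsto (fun K => Gf A C μ K 0) atTop (nhds 0) := by
      rw [tendsto_iff_norm_sub_tendsto_zero]
      simp only [sub_zero]
      exact squeeze_zero (fun K => norm_nonneg _) hb
        (by simpa using hqpow.const_mul (M*‖C‖))
    exact tendsto_nhds_unique (hGtend 0) h0
  have hFrec : ∀ (r : Fin B) (x : ℝ), (r:ℝ)/B ≤ x → x < ((r:ℝ)+1)/B →
      F x = μ⁻¹ • ((∑ s ∈ Finset.univ.filter fun s : Fin B => s < r, (A s) *ᵥ C)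
        + (A r) *ᵥ (F (B*x - r))) := by
    intro r x h1 h2
    have hmc : Continuous (fun v : Fin d → ℂ => (A r) *ᵥ v) := by
      have h := (Matrix.mulVecLin (A r)).continuous_of_finiteDimensional
      have he : (fun v : Fin d → ℂ => (A r) *ᵥ v) = ⇑(Matrix.mulVecLin (A r)) :=
        funext fun v => (Matrix.mulVecLin_apply _ _).symm
      rw [he]; exact h
    have hL : Tendsto (fun K => Gf A C μ (K+1) x) atTop (nhds (F x)) :=
      (hGtend x).comp (tendsto_add_atTop_nat 1)
    have hR : Tendsto
        (fun K => μ⁻¹ • ((∑ s ∈ Finset.univ.filter fun s : Fin B => s < r, (A s) *ᵥ C)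
          + (A r) *ᵥ (Gf A C μ K (B*x - r)))) atTop
        (nhds (μ⁻¹ • ((∑ s ∈ Finset.univ.filter fun s : Fin B => s < r, (A s) *ᵥ C)
          + (A r) *ᵥ (F (B*x - r))))) :=
      (((hmc.tendsto _).comp (hGtend (B*x - r))).const_add _).const_smul μ⁻¹
    have heq : (fun K => Gf A C μ (K+1) x)
        = fun K => μ⁻¹ • ((∑ s ∈ Finset.univ.filter fun s : Fin B => s < r, (A s) *ᵥ C)
          + (A r) *ᵥ (Gf A C μ K (B*x - r))) :=
      funext fun K => Gf_rec A C hB hμ0 hC' K r x h1 h2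
    rw [heq] at hL
    exact tendsto_nhds_unique hL hR
  have hDE : DilationEq A ρ ω C F := ⟨hF0, hF1, hFrec⟩
  -- continuity
  have hosc : ∀ (K:ℕ) (u v : ℝ), |u - v| < ((B:ℝ)^K)⁻¹ →
      ‖Gf A C μ K u - Gf A C μ K v‖ ≤ M * ‖C‖ * q^K := by
    have base : ∀ (K:ℕ) (u v : ℝ), v ≤ u → |u - v| < ((B:ℝ)^K)⁻¹ →
        ‖Gf A C μ K u - Gf A C μ K v‖ ≤ M * ‖C‖ * q^K := by
      intro K u v hvu hlt
      have h := norm_runSum_sub_le A C hB K hvu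
        ((le_abs_self _).trans_lt hlt) (hMlam K) (hMw K)
      calc ‖Gf A C μ K u - Gf A C μ K v‖
          = (ρ^K)⁻¹ * ‖runSum A C K u - runSum A C K v‖ := by
            rw [Gf, Gf, ← smul_sub, norm_smul, norm_inv, norm_pow, hμnorm]
        _ ≤ (ρ^K)⁻¹ * ((M*lam^K) * ‖C‖) :=
            mul_le_mul_of_nonneg_left h (by positivity)
        _ = M*‖C‖*q^K := by rw [hqdef, div_pow]; field_simp
    intro K u v hlt
    rcases le_total v u with h | h
    · exact base K u v h hlt
    · rw [norm_sub_rev]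
      rw [abs_sub_comm] at hlt
      exact base K v u h hlt
  have hFcont : Continuous F := by
    rw [Metric.continuous_iff]
    intro x ε hε
    set cc := 2 * ((M*c0)*(1-q)⁻¹) + M * ‖C‖ + 1 with hccdef
    have hq1' : (0:ℝ) < 1 - q := by linarith
    have hcc0 : 0 < cc := by positivity
    obtain ⟨K, hK⟩ : ∃ K:ℕ, q ^ K < ε / cc := by
      have := (hqpow.eventually (gt_mem_nhds (show (0:ℝ) < ε / cc by positivity))).exists
      exact this
    refine ⟨((B:ℝ)^K)⁻¹, by positivity, ?_⟩
    intro a ha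
    rw [Real.dist_eq] at ha
    have h2 := hosc K a x ha
    have t1 : F a - F x = (F a - Gf A C μ K a)
        + ((Gf A C μ K a - Gf A C μ K x) + (Gf A C μ K x - F x)) := by abel
    have t2 := htail K a
    have t3 : ‖Gf A C μ K x - F x‖ ≤ ((M*c0)*(1-q)⁻¹) * q^K := by
      rw [norm_sub_rev]; exact htail K x
    have hqK0 : (0:ℝ) ≤ q^K := by positivity
    have hcc : cc * q^K < ε := by
      have := (lt_div_iff₀ hcc0).mp hK
      nlinarith
    rw [dist_eq_norm, t1]
    calc ‖(F a - Gf A C μ K a) + ((Gf A C μ K a - Gf A C μ K x) + (Gf A C μ K x - F x))‖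
        ≤ ‖F a - Gf A C μ K a‖ + (‖Gf A C μ K a - Gf A C μ K x‖ + ‖Gf A C μ K x - F x‖) :=
          (norm_add_le _ _).trans (by gcongr; exact norm_add_le _ _)
      _ ≤ ((M*c0)*(1-q)⁻¹) * q^K + (M*‖C‖*q^K + ((M*c0)*(1-q)⁻¹) * q^K) := by
          gcongr
      _ < ε := by rw [hccdef] at hcc; nlinarith
  -- uniqueness
  have huniq : ∀ Ψ : ℝ → Fin d → ℂ, ContinuousOn Ψ (Set.Icc 0 1) → DilationEq A ρ ω C Ψ →
      Set.EqOn Ψ F (Set.Icc 0 1) := by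
    intro Ψ hΨc hΨE
    obtain ⟨hΨ0, hΨ1, hΨr⟩ := hΨE
    set Dl : ℝ → Fin d → ℂ := fun x => Ψ x - F x with hDldef
    have hDlrec : ∀ (n:ℕ) (r : Fin B) (x : ℝ), (r:ℝ)/B ≤ x → x < ((r:ℝ)+1)/B →
        (fun _:ℕ => Dl) (n+1) x = μ⁻¹ • (A r) *ᵥ ((fun _:ℕ => Dl) n (B*x - r)) := by
      intro n r x h1 h2
      simp only [hDldef]
      rw [hΨr r x h1 h2, hFrec r x h1 h2, ← smul_sub, add_sub_add_left_eq_sub,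
        ← Matrix.mulVec_sub]
    have hcont : ContinuousOn (fun x => ‖Dl x‖) (Set.Icc 0 1) :=
      (hΨc.sub hFcont.continuousOn).norm
    obtain ⟨z, hz, hmax⟩ := isCompact_Icc.exists_isMaxOn
      (Set.nonempty_Icc.mpr (by norm_num : (0:ℝ) ≤ 1)) hcont
    have hmax' : ∀ y ∈ Set.Icc (0:ℝ) 1, ‖Dl y‖ ≤ ‖Dl z‖ := fun y hy => hmax hy
    have hDl1 : Dl 1 = 0 := by
      simp only [hDldef]; rw [hΨ1, hF1, sub_self]
    have hbound : ∀ x:ℝ, 0 ≤ x → x < 1 → ‖Dl x‖ ≤ q^T * ‖Dl z‖ := by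
      intro x h0 h1
      obtain ⟨w, y, hy0, hy1, hDx⟩ :=
        iterDiff A hB (fun _:ℕ => Dl) hDlrec T x h0 h1
      rw [hDx, norm_smul, norm_inv, norm_pow, hμnorm]
      have h1' : ‖(wordProd A w) *ᵥ (Dl y)‖ ≤ lam^T * ‖Dl z‖ :=
        (Matrix.linfty_opNorm_mulVec _ _).trans
          (mul_le_mul (hjw w) (hmax' y ⟨hy0, hy1.le⟩) (norm_nonneg _) (by positivity))
      calc (ρ^T)⁻¹ * ‖(wordProd A w) *ᵥ (Dl y)‖
          ≤ (ρ^T)⁻¹ * (lam^T * ‖Dl z‖) := mul_le_mul_of_nonneg_left h1' (by positivity)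
        _ = q^T * ‖Dl z‖ := by rw [hqdef, div_pow]; field_simp
    have hMz : ‖Dl z‖ = 0 := by
      rcases lt_or_eq_of_le hz.2 with hzlt | hz1
      · have h := hbound z hz.1 hzlt
        have hqT : q^T < 1 := pow_lt_one₀ hq0.le hq1 (by omega)
        nlinarith [norm_nonneg (Dl z)]
      · rw [hz1, hDl1, norm_zero]
    intro x hx
    have := hmax' x hx
    rw [hMz] at this
    have hDlx : Dl x = 0 := norm_le_zero_iff.mp this
    exact sub_eq_zero.mp hDlx
  -- assemble
  refine ⟨F, hFcont.continuousOn, hDE, huniq, ?_⟩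
  rw [isBigO_iff]
  refine ⟨(M*c0)*(1-q)⁻¹, Filter.Eventually.of_forall fun K => ?_⟩
  haveI : Nonempty (Set.Icc (0:ℝ) 1) := ⟨⟨0, by norm_num⟩⟩
  have hb : ∀ x : Set.Icc (0:ℝ) 1,
      ‖(μ ^ K)⁻¹ • runSum A C K (x:ℝ) - F x‖ ≤ ((M*c0)*(1-q)⁻¹) * q^K := by
    intro x
    have : ‖Gf A C μ K (x:ℝ) - F x‖ ≤ ((M*c0)*(1-q)⁻¹) * q^K := by
      rw [norm_sub_rev]; exact htail K x
    exact this
  have hsup : (⨆ x : Set.Icc (0:ℝ) 1, ‖(μ ^ K)⁻¹ • runSum A C K (x:ℝ) - F x‖)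
      ≤ ((M*c0)*(1-q)⁻¹) * q^K := ciSup_le hb
  have hbdd : BddAbove (Set.range fun x : Set.Icc (0:ℝ) 1 =>
      ‖(μ ^ K)⁻¹ • runSum A C K (x:ℝ) - F x‖) :=
    ⟨((M*c0)*(1-q)⁻¹) * q^K, by rintro _ ⟨x, rfl⟩; exact hb x⟩
  have hge : (0:ℝ) ≤ ⨆ x : Set.Icc (0:ℝ) 1, ‖(μ ^ K)⁻¹ • runSum A C K (x:ℝ) - F x‖ :=
    le_trans (norm_nonneg _) (le_ciSup hbdd ⟨0, by norm_num⟩)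
  rw [Real.norm_eq_abs, abs_of_nonneg hge, Real.norm_eq_abs,
    abs_of_nonneg (by positivity : (0:ℝ) ≤ q^K)]
  exact hsup
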